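/- Let G be a finite simple graph with n ≥ 1 vertices. If G admits a proper 3-coloring, then min_I Béz(A(G × K₃); I) = (3n)!/(n!)³, where I ranges over all partitions of the 3n vertices of G × K₃. If G admits no proper 3-coloring, then 3 · min_I Béz(A(G × K₃); I) ≥ 4 · (3n)!/(n!)³. -/

import Mathlib

open Finset

open Classical in
/-- The support `A(H)` of a graph `H`: the exponent vectors `e_{v₁} + ⋯ + e_{v_s}`
(indicator vectors) of the cliques `{v₁, …, v_s}` of `H` of size `s ≤ 3`. -/
noncomputable def graphSupport {V : Type*} [Fintype V] (H : SimpleGraph V) :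
    Finset (V → ℕ) :=
  ((Finset.univ : Finset (Finset V)).filter
      (fun T : Finset V => T.card ≤ 3 ∧ H.IsClique (T : Set V))).image
    (fun T v => if v ∈ T then 1 else 0)

/-- The multi-homogeneous Bézout number of a support `A` with respect to the family
of groups of variables `I₁, …, I_k`, namely `(m!/(a₁!⋯a_k!)) · ∏_j d_j ^ a_j` where
`a_j = #I_j` and `d_j = max_{α ∈ A} ∑_{l ∈ I_j} α_l`. -/
noncomputable def bez {V : Type*} [Fintype V] (A : Finset (V → ℕ))
    {k : ℕ} (I : Fin k → Finset V) : ℕ :=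
  Nat.multinomial Finset.univ (fun j => (I j).card) *
    ∏ j, (A.sup fun α => ∑ l ∈ I j, α l) ^ (I j).card

/-- `I₁, …, I_k` is a partition of the (finite) type `V`: the classes are pairwise
disjoint and they cover `V`. -/
def IsPartitionFam {V : Type*} {k : ℕ} (I : Fin k → Finset V) : Prop :=
  (∀ i j, i ≠ j → Disjoint (I i) (I j)) ∧ ∀ v, ∃ j, v ∈ I j

/-- The family of classes `I₁, …, I_k` is a proper coloring of `H`: no class contains
two adjacent vertices. -/
def ProperFam {V : Type*} (H : SimpleGraph V) {k : ℕ} (I : Fin k → Finset V) : Prop :=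
  ∀ j, ∀ u ∈ I j, ∀ v ∈ I j, ¬ H.Adj u v

/-- The minimal multi-homogeneous Bézout number of a support `A`, over all partitions
of the set of variables. -/
noncomputable def minBez {V : Type*} [Fintype V] (A : Finset (V → ℕ)) : ℕ :=
  sInf {b : ℕ | ∃ (k : ℕ) (I : Fin k → Finset V), IsPartitionFam I ∧ bez A I = b}

open Classical in
/-- The `l`-fold cartesian product `A^l` of a support `A ⊆ ℕ^V`: the concatenations
`(α⁽¹⁾, …, α⁽ˡ⁾)` of members of `A`, indexed by `Fin l × V`. -/
noncomputable def powSupport {V : Type*} [Fintype V] (A : Finset (V → ℕ)) (l : ℕ) :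
    Finset (Fin l × V → ℕ) :=
  (Fintype.piFinset (fun _ : Fin l => A)).image (fun f p => f p.1 p.2)



lemma fact_mul_fact_le {b r n : ℕ} (hb : b ≤ n) (hr : r ≤ n) (hbr : n ≤ b + r) :
    b.factorial * r.factorial ≤ n.factorial * (b + r - n).factorial := by
  set u := b + r - n with hu
  have h1 : u ≤ b := by omega
  have e1 : u.factorial * Nat.descFactorial b (b - u) = b.factorial := by
    have := Nat.factorial_mul_descFactorial (n := b) (k := b - u) (Nat.sub_le b u)
    rwa [Nat.sub_sub_self h1] at this
  have e2 : r.factorial * Nat.descFactorial n (n - r) = n.factorial := by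
    have := Nat.factorial_mul_descFactorial (n := n) (k := n - r) (Nat.sub_le n r)
    rwa [Nat.sub_sub_self hr] at this
  have h2 : b - u = n - r := by omega
  have mono : Nat.descFactorial b (b - u) ≤ Nat.descFactorial n (n - r) := by
    rw [h2]; exact Nat.descFactorial_le _ hb
  calc b.factorial * r.factorial
      = (u.factorial * Nat.descFactorial b (b - u)) * r.factorial := by rw [e1]
    _ ≤ (u.factorial * Nat.descFactorial n (n - r)) * r.factorial := by
        exact Nat.mul_le_mul_right _ (Nat.mul_le_mul_left _ mono)
    _ = n.factorial * u.factorial := by rw [← e2]; ring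
    _ = n.factorial * (b + r - n).factorial := by rw [hu]

lemma factStep {n : ℕ} (hn : 0 < n) {b : ℕ} (hb : b ≤ n) (X : ℕ) :
    b.factorial * (n.factorial ^ (X / n) * (X % n).factorial) ≤
      n.factorial ^ ((X + b) / n) * ((X + b) % n).factorial := by
  obtain ⟨q, r, hr, rfl⟩ : ∃ q r, r < n ∧ X = n * q + r :=
    ⟨X / n, X % n, Nat.mod_lt _ hn, ((Nat.div_add_mod X n).symm)⟩
  have hdiv : (n * q + r) / n = q := by
    rw [Nat.mul_add_div hn, Nat.div_eq_of_lt hr, Nat.add_zero]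
  have hmod : (n * q + r) % n = r := by
    rw [Nat.mul_add_mod, Nat.mod_eq_of_lt hr]
  rw [hdiv, hmod]
  have harr : n * q + r + b = n * q + (r + b) := by ring
  rw [harr, Nat.mul_add_div hn, Nat.mul_add_mod]
  by_cases hc : r + b < n
  · rw [Nat.div_eq_of_lt hc, Nat.mod_eq_of_lt hc, Nat.add_zero]
    have : b.factorial * r.factorial ≤ (r + b).factorial := by
      have := Nat.factorial_mul_factorial_dvd_factorial_add b r
      exact Nat.le_of_dvd (Nat.factorial_pos _) (by rwa [Nat.add_comm r b])
    calc b.factorial * (n.factorial ^ q * r.factorial)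
        = n.factorial ^ q * (b.factorial * r.factorial) := by ring
      _ ≤ n.factorial ^ q * (r + b).factorial := Nat.mul_le_mul_left _ this
  · push_neg at hc
    have h2n : r + b < 2 * n := by omega
    have hdiv2 : (r + b) / n = 1 := by
      have h2 : (r + b) / n < 2 := (Nat.div_lt_iff_lt_mul hn).2 (by omega)
      have h1 : 1 ≤ (r + b) / n := (Nat.one_le_div_iff hn).2 hc
      omega
    have hmod2 : (r + b) % n = r + b - n := by
      rw [Nat.mod_eq_sub_mod hc, Nat.mod_eq_of_lt (by omega)]
    rw [hdiv2, hmod2]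
    have key : b.factorial * r.factorial ≤ n.factorial * (b + r - n).factorial :=
      fact_mul_fact_le hb (le_of_lt hr) (by omega)
    have harr2 : r + b - n = b + r - n := by omega
    calc b.factorial * (n.factorial ^ q * r.factorial)
        = n.factorial ^ q * (b.factorial * r.factorial) := by ring
      _ ≤ n.factorial ^ q * (n.factorial * (b + r - n).factorial) :=
          Nat.mul_le_mul_left _ key
      _ = n.factorial ^ (q + 1) * (r + b - n).factorial := by rw [harr2, pow_succ]; ring

lemma prodFact {ι : Type*} {n : ℕ} (hn : 0 < n) (s : Finset ι) (f : ι → ℕ)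
    (hf : ∀ i ∈ s, f i ≤ n) :
    ∏ i ∈ s, (f i).factorial ≤
      n.factorial ^ ((∑ i ∈ s, f i) / n) * ((∑ i ∈ s, f i) % n).factorial := by
  induction s using Finset.cons_induction with
  | empty => simp
  | cons a s ha ih =>
    rw [Finset.prod_cons, Finset.sum_cons]
    have h1 := ih (fun i hi => hf i (Finset.mem_cons.2 (Or.inr hi)))
    calc (f a).factorial * ∏ i ∈ s, (f i).factorial
        ≤ (f a).factorial * (n.factorial ^ ((∑ i ∈ s, f i) / n) * ((∑ i ∈ s, f i) % n).factorial) :=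
          Nat.mul_le_mul_left _ h1
      _ ≤ n.factorial ^ ((∑ i ∈ s, f i + f a) / n) * ((∑ i ∈ s, f i + f a) % n).factorial :=
          factStep hn (hf a (Finset.mem_cons_self ..)) _
      _ = n.factorial ^ ((f a + ∑ i ∈ s, f i) / n) * ((f a + ∑ i ∈ s, f i) % n).factorial := by
          rw [Nat.add_comm]


lemma n_le_choose : ∀ (n b : ℕ), 1 ≤ b → b < n → n ≤ n.choose b := by
  intro n
  induction n with
  | zero => intro b h1 h2; omega
  | succ n ih =>
    intro b h1 h2
    obtain ⟨c, rfl⟩ : ∃ c, b = c + 1 := ⟨b - 1, by omega⟩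
    rw [Nat.choose_succ_succ']
    by_cases hc : c = 0
    · subst hc; simp
    · by_cases hcn : c + 1 = n
      · have : n.choose c = n := by
          have : c = n - 1 := by omega
          subst this
          rw [Nat.choose_symm (by omega)]
          simp [Nat.sub_sub_self (by omega : 1 ≤ n)]
        have h2 : 1 ≤ n.choose (c+1) := Nat.choose_pos (by omega)
        omega
      · have := ih (c+1) (by omega) (by omega)
        have h2 : 1 ≤ n.choose c := Nat.choose_pos (by omega)
        omega

lemma bFactBound {n b : ℕ} (h1 : 1 ≤ b) (h2 : b < n) :
    n * (b.factorial * (n - b).factorial) ≤ n.factorial := by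
  have hspec := Nat.choose_mul_factorial_mul_factorial (le_of_lt h2)
  calc n * (b.factorial * (n - b).factorial)
      ≤ n.choose b * (b.factorial * (n - b).factorial) :=
        Nat.mul_le_mul_right _ (n_le_choose n b h1 h2)
    _ = n.factorial := by rw [← hspec]; ring

lemma multinom_le : ∀ (d : ℕ) (a : ℕ) (b : Fin d → ℕ), (∑ i, b i) = a → 1 ≤ a →
    a.factorial ≤ (∏ i, (b i).factorial) * d ^ (a - 1) := by
  intro d
  induction d with
  | zero => intro a b hs ha; simp at hs; omega
  | succ d ih =>
    intro a b hs ha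
    rw [Fin.sum_univ_succ] at hs
    obtain ⟨s, hsdef⟩ : ∃ s, ∑ i : Fin d, b i.succ = s := ⟨_, rfl⟩
    obtain ⟨b0, hb0⟩ : ∃ b0, b 0 = b0 := ⟨_, rfl⟩
    rw [hsdef, hb0] at hs
    rw [Fin.prod_univ_succ, hb0]
    by_cases hs0 : s = 0
    · -- a = b0
      have hab : a = b0 := by omega
      have hp : 1 ≤ ∏ i : Fin d, (b i.succ).factorial :=
        Finset.one_le_prod' (fun i _ => Nat.one_le_iff_ne_zero.2 (Nat.factorial_ne_zero _))
      calc a.factorial = b0.factorial := by rw [hab]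
        _ ≤ (b0.factorial * ∏ i : Fin d, (b i.succ).factorial) * (d+1) ^ (a-1) := by
            have : 1 ≤ (d+1) ^ (a-1) := Nat.one_le_pow _ _ (by omega)
            calc b0.factorial = b0.factorial * 1 * 1 := by ring
              _ ≤ (b0.factorial * ∏ i : Fin d, (b i.succ).factorial) * (d+1) ^ (a-1) :=
                  Nat.mul_le_mul (Nat.mul_le_mul_left _ hp) this
    · have hs1 : 1 ≤ s := by omega
      have hd : 1 ≤ d := by
        by_contra hd
        have : d = 0 := by omega
        subst this
        simp at hsdef
        omega
      have hihs := ih s (fun i => b i.succ) hsdef hs1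
      have hb0a : b0 ≤ a := by omega
      have hchoose : a.choose b0 * b0.factorial * s.factorial = a.factorial := by
        have := Nat.choose_mul_factorial_mul_factorial hb0a
        have hsub : a - b0 = s := by omega
        rwa [hsub] at this
      -- key : a.choose b0 * d ^ (s-1) ≤ (d+1)^(a-1)
      have key : a.choose b0 * d ^ (s - 1) ≤ (d + 1) ^ (a - 1) := by
        by_cases hb00 : b0 = 0
        · subst hb00
          have hsa : s = a := by omega
          rw [Nat.choose_zero_right, Nat.one_mul, hsa]
          exact Nat.pow_le_pow_left (by omega) _
        · -- b0 ≥ 1, s ≤ a - 1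
          have hsa1 : s ≤ a - 1 := by omega
          have hexp : (d + 1) ^ (a - 1) = ∑ m ∈ Finset.range (a - 1 + 1), d ^ m * 1 ^ (a-1-m) * ((a-1).choose m) :=
            Commute.add_pow (Commute.all d 1) (a-1)
          have hsubset : ({s - 1, s} : Finset ℕ) ⊆ Finset.range (a - 1 + 1) := by
            intro x hx
            simp only [Finset.mem_insert, Finset.mem_singleton] at hx
            rcases hx with rfl | rfl <;> simp <;> omega
          have hpair : ∑ m ∈ ({s - 1, s} : Finset ℕ), d ^ m * 1 ^ (a-1-m) * ((a-1).choose m)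
              ≤ ∑ m ∈ Finset.range (a - 1 + 1), d ^ m * 1 ^ (a-1-m) * ((a-1).choose m) :=
            Finset.sum_le_sum_of_subset hsubset
          rw [Finset.sum_pair (by omega : s - 1 ≠ s)] at hpair
          simp only [one_pow, mul_one] at hpair
          have hpascal : a.choose b0 = (a-1).choose (s-1) + (a-1).choose s := by
            have h1 : a.choose b0 = a.choose s := by
              rw [← Nat.choose_symm hb0a]
              congr 1
              omega
            obtain ⟨a', rfl⟩ : ∃ a', a = a' + 1 := ⟨a - 1, by omega⟩
            obtain ⟨s', rfl⟩ : ∃ s', s = s' + 1 := ⟨s - 1, by omega⟩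
            simp only [Nat.add_sub_cancel]
            rw [h1, Nat.choose_succ_succ']
          have hmono : a.choose b0 * d ^ (s-1)
              ≤ d ^ (s-1) * (a-1).choose (s-1) + d ^ s * (a-1).choose s := by
            rw [hpascal]
            have h3 : s = (s - 1) + 1 := by omega
            have : d ^ (s-1) * (a-1).choose s ≤ d ^ s * (a-1).choose s :=
              Nat.mul_le_mul_right _ (Nat.pow_le_pow_right (by omega) (by omega))
            calc ((a-1).choose (s-1) + (a-1).choose s) * d ^ (s-1)
                = d ^ (s-1) * (a-1).choose (s-1) + d ^ (s-1) * (a-1).choose s := by ring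
              _ ≤ d ^ (s-1) * (a-1).choose (s-1) + d ^ s * (a-1).choose s := by omega
          rw [hexp]
          simp only [one_pow, mul_one] at hmono ⊢
          omega
      calc a.factorial = a.choose b0 * b0.factorial * s.factorial := hchoose.symm
        _ ≤ a.choose b0 * b0.factorial * ((∏ i : Fin d, (b i.succ).factorial) * d ^ (s-1)) :=
            Nat.mul_le_mul_left _ hihs
        _ = (b0.factorial * ∏ i : Fin d, (b i.succ).factorial) * (a.choose b0 * d ^ (s-1)) := by ring
        _ ≤ (b0.factorial * ∏ i : Fin d, (b i.succ).factorial) * (d+1) ^ (a-1) :=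
            Nat.mul_le_mul_left _ key

lemma split_exists : ∀ (d : ℕ) (n a : ℕ), a ≤ n * d →
    ∃ b : Fin d → ℕ, (∀ i, b i ≤ n) ∧ (∑ i, b i) = a := by
  intro d
  induction d with
  | zero => intro n a h; exact ⟨fun i => i.elim0, fun i => i.elim0, by simpa using (by omega : a = 0).symm⟩
  | succ d ih =>
    intro n a h
    have h' : n * (d + 1) = n * d + n := by ring
    obtain ⟨b, hb, hs⟩ := ih n (a - min a n) (by omega)
    refine ⟨Fin.cons (min a n) b, ?_, ?_⟩
    · intro i
      refine Fin.cases ?_ ?_ i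
      · simp
      · intro j; simpa using hb j
    · rw [Fin.sum_cons, hs]; omega


section Support
open Classical

lemma sum_ind {W : Type*} (S T : Finset W) :
    (∑ l ∈ S, if l ∈ T then (1:ℕ) else 0) = (S ∩ T).card := by
  rw [Finset.sum_ite_mem]
  simp

variable {W : Type*} [Fintype W] {H : SimpleGraph W}

lemma indicator_mem {T : Finset W} (h3 : T.card ≤ 3) (hc : H.IsClique (T : Set W)) :
    (fun v => if v ∈ T then (1:ℕ) else 0) ∈ graphSupport H := by
  rw [graphSupport]
  exact Finset.mem_image.mpr ⟨T, Finset.mem_filter.mpr ⟨Finset.mem_univ _, h3, hc⟩, rfl⟩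

lemma graphSupport_sup_le_one {S : Finset W}
    (hind : ∀ u ∈ S, ∀ v ∈ S, ¬ H.Adj u v) :
    (graphSupport H).sup (fun α => ∑ l ∈ S, α l) ≤ 1 := by
  refine Finset.sup_le fun α hα => ?_
  rw [graphSupport] at hα
  obtain ⟨T, hT, rfl⟩ := Finset.mem_image.mp hα
  refine le_trans (le_of_eq (sum_ind S T)) ?_
  by_contra hlt
  push_neg at hlt
  obtain ⟨x, hx, y, hy, hxy⟩ := Finset.one_lt_card.mp hlt
  have hc : H.IsClique (T : Set W) := (Finset.mem_filter.mp hT).2.2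
  have hadj := hc (Finset.mem_coe.mpr (Finset.mem_inter.mp hx).2)
    (Finset.mem_coe.mpr (Finset.mem_inter.mp hy).2) hxy
  exact hind x (Finset.mem_inter.mp hx).1 y (Finset.mem_inter.mp hy).1 hadj

lemma one_le_sup {S : Finset W} (hS : S.Nonempty) :
    1 ≤ (graphSupport H).sup (fun α => ∑ l ∈ S, α l) := by
  obtain ⟨w, hw⟩ := hS
  have hmem := indicator_mem (H := H) (T := ({w} : Finset W)) (by simp)
    (by rw [Finset.coe_singleton]; exact Set.pairwise_singleton _ _)
  have h := le_of_eq_of_le (sum_ind S {w}).symm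
    (Finset.le_sup (f := fun α : W → ℕ => ∑ l ∈ S, α l) hmem)
  refine le_trans ?_ h
  exact Finset.card_pos.mpr ⟨w, Finset.mem_inter.mpr ⟨hw, Finset.mem_singleton_self w⟩⟩

lemma two_le_sup {S : Finset W} {u v : W} (hu : u ∈ S) (hv : v ∈ S) (hadj : H.Adj u v) :
    2 ≤ (graphSupport H).sup (fun α => ∑ l ∈ S, α l) := by
  have hne : u ≠ v := hadj.ne
  have hc : H.IsClique (({u, v} : Finset W) : Set W) := by
    intro x hx y hy hxy
    simp only [Finset.coe_insert, Finset.coe_singleton, Set.mem_insert_iff,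
      Set.mem_singleton_iff] at hx hy
    rcases hx with rfl | rfl <;> rcases hy with rfl | rfl
    · exact absurd rfl hxy
    · exact hadj
    · exact hadj.symm
    · exact absurd rfl hxy
  have hcard : ({u, v} : Finset W).card = 2 := by
    rw [Finset.card_insert_of_notMem (by simp [hne]), Finset.card_singleton]
  have hmem := indicator_mem (H := H) (T := {u, v}) (by omega) hc
  have h := le_of_eq_of_le (sum_ind S {u, v}).symm
    (Finset.le_sup (f := fun α : W → ℕ => ∑ l ∈ S, α l) hmem)
  refine le_trans ?_ h
  exact Finset.one_lt_card.mpr ⟨u, Finset.mem_inter.mpr ⟨hu, by simp⟩,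
    v, Finset.mem_inter.mpr ⟨hv, by simp⟩, hne⟩

end Support

section Box
open Classical

variable {V : Type*} {G : SimpleGraph V}

lemma fiber_clique (v : V) :
    (G.boxProd (SimpleGraph.completeGraph (Fin 3))).IsClique
      ((({v} : Finset V) ×ˢ (Finset.univ : Finset (Fin 3)) : Finset (V × Fin 3)) : Set (V × Fin 3)) := by
  intro x hx y hy hxy
  simp only [Finset.coe_product, Finset.coe_singleton, Set.mem_prod, Set.mem_singleton_iff] at hx hy
  refine SimpleGraph.boxProd_adj.mpr (Or.inr ⟨?_, hx.1.trans hy.1.symm⟩)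
  have : x.2 ≠ y.2 := by
    intro h
    exact hxy (Prod.ext (hx.1.trans hy.1.symm) h)
  simpa [SimpleGraph.completeGraph] using this

lemma card_le_n_mul_sup [Fintype V] {n : ℕ} (hn : Fintype.card V = n) (S : Finset (V × Fin 3)) :
    S.card ≤ n * (graphSupport (G.boxProd (SimpleGraph.completeGraph (Fin 3)))).sup
      (fun α => ∑ l ∈ S, α l) := by
  have hfib : ∀ v : V, (S.filter (fun w => w.1 = v)).card ≤
      (graphSupport (G.boxProd (SimpleGraph.completeGraph (Fin 3)))).sup (fun α => ∑ l ∈ S, α l) := by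
    intro v
    have hcard : (({v} : Finset V) ×ˢ (Finset.univ : Finset (Fin 3))).card ≤ 3 := by
      rw [Finset.card_product, Finset.card_singleton]
      simp
    have hmem := indicator_mem (H := G.boxProd (SimpleGraph.completeGraph (Fin 3)))
      (T := ({v} : Finset V) ×ˢ (Finset.univ : Finset (Fin 3))) hcard (fiber_clique v)
    have h := le_of_eq_of_le (sum_ind S (({v} : Finset V) ×ˢ (Finset.univ : Finset (Fin 3)))).symm
      (Finset.le_sup (f := fun α : V × Fin 3 → ℕ => ∑ l ∈ S, α l) hmem)
    refine le_trans ?_ h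
    refine Finset.card_le_card ?_
    intro w hw
    have h1 := Finset.mem_filter.mp hw
    exact (@Finset.mem_inter _ (fun a b => Classical.propDecidable _) _ _ _).mpr
      ⟨h1.1, Finset.mem_product.mpr ⟨by simp [h1.2], Finset.mem_univ _⟩⟩
  have hsplit : S.card = ∑ v : V, (S.filter (fun w => w.1 = v)).card :=
    Finset.card_eq_sum_card_fiberwise (fun x _ => Finset.mem_univ x.1)
  calc S.card = ∑ v : V, (S.filter (fun w => w.1 = v)).card := hsplit
    _ ≤ ∑ _v : V, (graphSupport (G.boxProd (SimpleGraph.completeGraph (Fin 3)))).sup (fun α => ∑ l ∈ S, α l) :=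
        Finset.sum_le_sum (fun v _ => hfib v)
    _ = n * (graphSupport (G.boxProd (SimpleGraph.completeGraph (Fin 3)))).sup (fun α => ∑ l ∈ S, α l) := by
        rw [Finset.sum_const, smul_eq_mul, Finset.card_univ, hn]

lemma partition_sum {W : Type*} [Fintype W] {k : ℕ} {I : Fin k → Finset W}
    (hI : IsPartitionFam I) : ∑ j, (I j).card = Fintype.card W := by
  classical
  have hbu : (Finset.univ : Finset (Fin k)).biUnion I = Finset.univ := by
    apply Finset.eq_univ_of_forall
    intro w
    obtain ⟨j, hj⟩ := hI.2 w
    exact Finset.mem_biUnion.mpr ⟨j, Finset.mem_univ _, hj⟩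
  calc ∑ j, (I j).card = ((Finset.univ : Finset (Fin k)).biUnion I).card :=
        (Finset.card_biUnion (fun i _ j _ hij => hI.1 i j hij)).symm
    _ = Fintype.card W := by rw [hbu, Finset.card_univ]

end Box

section Key
open Classical

lemma multinomial_three {n : ℕ} :
    n.factorial ^ 3 * Nat.multinomial (Finset.univ : Finset (Fin 3)) (fun _ => n)
      = (3 * n).factorial := by
  have h := Nat.multinomial_spec (Finset.univ : Finset (Fin 3)) (fun _ => n)
  have h1 : (∏ _i : Fin 3, n.factorial) = n.factorial ^ 3 := by
    rw [Finset.prod_const, Finset.card_univ, Fintype.card_fin]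
  have h2 : (∑ _i : Fin 3, n) = 3 * n := by
    rw [Finset.sum_const, Finset.card_univ, Fintype.card_fin, smul_eq_mul]
  rw [h1, h2] at h
  exact h

lemma M_def {n : ℕ} :
    (3 * n).factorial / n.factorial ^ 3
      = Nat.multinomial (Finset.univ : Finset (Fin 3)) (fun _ => n) := by
  refine Nat.div_eq_of_eq_mul_left (by positivity) ?_
  rw [← multinomial_three]
  ring

lemma key {V : Type*} [Fintype V] (G : SimpleGraph V) {n : ℕ} (hn : Fintype.card V = n)
    (hn1 : 1 ≤ n) {k : ℕ} (I : Fin k → Finset (V × Fin 3)) (hI : IsPartitionFam I) :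
    (3 * n).factorial ≤
        n.factorial ^ 3 * bez (graphSupport (G.boxProd (SimpleGraph.completeGraph (Fin 3)))) I ∧
      ((¬ ∃ J : Fin 3 → Finset V, IsPartitionFam J ∧ ProperFam G J) →
        2 * (3 * n).factorial ≤
          n.factorial ^ 3 * bez (graphSupport (G.boxProd (SimpleGraph.completeGraph (Fin 3)))) I) := by
  set A := graphSupport (G.boxProd (SimpleGraph.completeGraph (Fin 3))) with hA
  set d : Fin k → ℕ := fun j => A.sup (fun α => ∑ l ∈ I j, α l) with hd
  set a : Fin k → ℕ := fun j => (I j).card with ha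
  have hW : Fintype.card (V × Fin 3) = 3 * n := by
    rw [Fintype.card_prod, Fintype.card_fin, hn]; ring
  have hsuma : ∑ j, a j = 3 * n := (partition_sum hI).trans hW
  have hand : ∀ j, a j ≤ n * d j := fun j => card_le_n_mul_sup hn (I j)
  have hd1 : ∀ j, (I j).Nonempty → 1 ≤ d j := fun j hj => one_le_sup hj
  have ha0 : ∀ j, d j = 0 → a j = 0 := by
    intro j h
    by_contra hne
    have : (I j).Nonempty := Finset.card_pos.mp (show 0 < a j by omega)
    have := hd1 j this
    omega
  have hsplit : ∀ j, ∃ b : Fin (d j) → ℕ, (∀ i, b i ≤ n) ∧ (∑ i, b i) = a j :=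
    fun j => split_exists (d j) n (a j) (hand j)
  choose b hb1 hb2 using hsplit
  -- total product of split factorials is ≤ n!^3
  have hP : (∏ j, ∏ i, (b j i).factorial) ≤ n.factorial ^ 3 := by
    have h1 := prodFact (n := n) (by omega) (Finset.univ : Finset ((j : Fin k) × Fin (d j)))
      (fun p => b p.1 p.2) (fun p _ => hb1 p.1 p.2)
    have hsum : ∑ p : (j : Fin k) × Fin (d j), b p.1 p.2 = 3 * n := by
      rw [← Finset.univ_sigma_univ, Finset.sum_sigma]
      exact (Finset.sum_congr rfl fun j _ => hb2 j).trans hsuma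
    have hprod : ∏ p : (j : Fin k) × Fin (d j), (b p.1 p.2).factorial
        = ∏ j, ∏ i, (b j i).factorial := by
      rw [← Finset.univ_sigma_univ, Finset.prod_sigma]
    rw [hprod, hsum] at h1
    have hdiv : 3 * n / n = 3 := by
      rw [mul_comm, Nat.mul_div_cancel_left _ (show 0 < n by omega)]
    have hmod : 3 * n % n = 0 := Nat.mul_mod_left 3 n
    rw [hdiv, hmod] at h1
    simpa using h1
  -- per-class bound
  have hclass : ∀ j, (a j).factorial ≤ (∏ i, (b j i).factorial) * (d j) ^ (a j) := by
    intro j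
    by_cases haj : a j = 0
    · rw [haj]
      have hp : 1 ≤ ∏ i, (b j i).factorial :=
        Finset.one_le_prod' (fun i _ => Nat.one_le_iff_ne_zero.2 (Nat.factorial_ne_zero _))
      simpa using hp
    · have h1d : 1 ≤ d j := by
        by_contra h
        have : d j = 0 := by omega
        exact haj (ha0 j this)
      have h := multinom_le (d j) (a j) (b j) (hb2 j) (by omega)
      refine h.trans (Nat.mul_le_mul_left _ (Nat.pow_le_pow_right h1d (by omega)))
  have hfact : (∏ j, (a j).factorial) * Nat.multinomial Finset.univ a = (3 * n).factorial := by
    rw [Nat.multinomial_spec, hsuma]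
  have hbezform : bez A I = Nat.multinomial Finset.univ a * ∏ j, (d j) ^ (a j) := rfl
  have hchain : ∏ j, (a j).factorial ≤ (∏ j, ∏ i, (b j i).factorial) * ∏ j, (d j) ^ (a j) := by
    rw [← Finset.prod_mul_distrib]
    exact Finset.prod_le_prod' (fun j _ => hclass j)
  constructor
  · calc (3 * n).factorial = (∏ j, (a j).factorial) * Nat.multinomial Finset.univ a := hfact.symm
      _ ≤ ((∏ j, ∏ i, (b j i).factorial) * ∏ j, (d j) ^ (a j)) * Nat.multinomial Finset.univ a :=
          Nat.mul_le_mul_right _ hchain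
      _ = (∏ j, ∏ i, (b j i).factorial) * (Nat.multinomial Finset.univ a * ∏ j, (d j) ^ (a j)) := by
          ring
      _ ≤ n.factorial ^ 3 * (Nat.multinomial Finset.univ a * ∏ j, (d j) ^ (a j)) :=
          Nat.mul_le_mul_right _ hP
      _ = n.factorial ^ 3 * bez A I := by rw [hbezform]
  · intro hcol
    by_cases hd2 : ∃ j0, 2 ≤ d j0
    · obtain ⟨j0, hj0⟩ := hd2
      have haj0 : 1 ≤ a j0 := by
        by_contra h
        have h0 : a j0 = 0 := by omega
        have hemp : (I j0) = ∅ := Finset.card_eq_zero.mp h0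
        have hle : d j0 ≤ 0 := by
          refine Finset.sup_le fun α _ => ?_
          rw [hemp]
          simp
        omega
      have hstrong : 2 * (a j0).factorial ≤ (∏ i, (b j0 i).factorial) * (d j0) ^ (a j0) := by
        have h := multinom_le (d j0) (a j0) (b j0) (hb2 j0) haj0
        have h2 : 2 * (d j0) ^ (a j0 - 1) ≤ (d j0) ^ (a j0) := by
          have : (d j0) ^ (a j0) = (d j0) ^ (a j0 - 1) * d j0 := by
            rw [← pow_succ]
            congr 1
            omega
          rw [this]
          calc 2 * (d j0) ^ (a j0 - 1) = (d j0) ^ (a j0 - 1) * 2 := by ring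
            _ ≤ (d j0) ^ (a j0 - 1) * d j0 := Nat.mul_le_mul_left _ hj0
        calc 2 * (a j0).factorial ≤ 2 * ((∏ i, (b j0 i).factorial) * (d j0) ^ (a j0 - 1)) :=
              Nat.mul_le_mul_left _ h
          _ = (∏ i, (b j0 i).factorial) * (2 * (d j0) ^ (a j0 - 1)) := by ring
          _ ≤ (∏ i, (b j0 i).factorial) * (d j0) ^ (a j0) := Nat.mul_le_mul_left _ h2
      have hchain2 : 2 * ∏ j, (a j).factorial
          ≤ (∏ j, ∏ i, (b j i).factorial) * ∏ j, (d j) ^ (a j) := by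
        rw [← Finset.prod_mul_distrib]
        rw [← Finset.mul_prod_erase Finset.univ _ (Finset.mem_univ j0),
          ← Finset.mul_prod_erase Finset.univ
            (fun j => (∏ i, (b j i).factorial) * (d j) ^ (a j)) (Finset.mem_univ j0),
          ← Nat.mul_assoc]
        exact Nat.mul_le_mul hstrong
          (Finset.prod_le_prod' (fun j (_ : j ∈ Finset.univ.erase j0) => hclass j))
      calc 2 * (3 * n).factorial
          = (2 * ∏ j, (a j).factorial) * Nat.multinomial Finset.univ a := by
            rw [← hfact]; ring
        _ ≤ ((∏ j, ∏ i, (b j i).factorial) * ∏ j, (d j) ^ (a j)) * Nat.multinomial Finset.univ a :=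
            Nat.mul_le_mul_right _ hchain2
        _ = (∏ j, ∏ i, (b j i).factorial) * (Nat.multinomial Finset.univ a * ∏ j, (d j) ^ (a j)) := by
            ring
        _ ≤ n.factorial ^ 3 * (Nat.multinomial Finset.univ a * ∏ j, (d j) ^ (a j)) :=
            Nat.mul_le_mul_right _ hP
        _ = n.factorial ^ 3 * bez A I := by rw [hbezform]
    · push_neg at hd2
      have hdle : ∀ j, d j ≤ 1 := fun j => by have := hd2 j; omega
      have hale : ∀ j, a j ≤ n := by
        intro j
        calc a j ≤ n * d j := hand j
          _ ≤ n * 1 := Nat.mul_le_mul_left n (hdle j)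
          _ = n := Nat.mul_one n
      have hdpow1 : ∀ j, 1 ≤ (d j) ^ (a j) := by
        intro j
        by_cases haj : a j = 0
        · rw [haj]; simp
        · have h1d : 1 ≤ d j := by
            by_contra h
            exact haj (ha0 j (by omega))
          exact Nat.one_le_pow _ _ (by omega)
      have hprodd : 1 ≤ ∏ j, (d j) ^ (a j) := Finset.one_le_prod' (fun j _ => hdpow1 j)
      have hind : ∀ j, ∀ u ∈ I j, ∀ v ∈ I j, ¬ (G.boxProd (SimpleGraph.completeGraph (Fin 3))).Adj u v := by
        intro j u hu v hv hadj
        have h1 : 2 ≤ d j := two_le_sup (H := G.boxProd (SimpleGraph.completeGraph (Fin 3))) hu hv hadj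
        have h2 := hdle j
        omega
      by_cases hmid : ∃ j0, 1 ≤ a j0 ∧ a j0 < n
      · -- quantitative middle case
        obtain ⟨j0, hj1, hj2⟩ := hmid
        have hn2 : 2 ≤ n := by omega
        have herasesum : ∑ j ∈ Finset.univ.erase j0, a j = n * 2 + (n - a j0) := by
          have h := Finset.add_sum_erase Finset.univ a (Finset.mem_univ j0)
          rw [hsuma] at h
          generalize hE : ∑ j ∈ Finset.univ.erase j0, a j = E at h ⊢
          omega
        have herase : ∏ j ∈ Finset.univ.erase j0, (a j).factorial
            ≤ n.factorial ^ 2 * (n - a j0).factorial := by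
          have h1 := prodFact (n := n) (by omega) (Finset.univ.erase j0) a (fun j _ => hale j)
          rw [herasesum] at h1
          have hdiv : (n * 2 + (n - a j0)) / n = 2 := by
            rw [Nat.mul_add_div (by omega), Nat.div_eq_of_lt (by omega)]
          have hmod : (n * 2 + (n - a j0)) % n = n - a j0 := by
            rw [Nat.mul_add_mod, Nat.mod_eq_of_lt (by omega)]
          rw [hdiv, hmod] at h1
          exact h1
        have hbig : n * (2 * ∏ j, (a j).factorial) ≤ n * n.factorial ^ 3 := by
          have hstep : ∏ j, (a j).factorial
              ≤ (a j0).factorial * (n.factorial ^ 2 * (n - a j0).factorial) := by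
            rw [← Finset.mul_prod_erase Finset.univ _ (Finset.mem_univ j0)]
            exact Nat.mul_le_mul_left _ herase
          have hbb : n * ((a j0).factorial * (n - a j0).factorial) ≤ n.factorial :=
            bFactBound hj1 hj2
          calc n * (2 * ∏ j, (a j).factorial)
              ≤ n * (n * ∏ j, (a j).factorial) := by
                have : 2 * ∏ j, (a j).factorial ≤ n * ∏ j, (a j).factorial :=
                  Nat.mul_le_mul_right _ hn2
                exact Nat.mul_le_mul_left _ this
            _ ≤ n * (n * ((a j0).factorial * (n.factorial ^ 2 * (n - a j0).factorial))) := by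
                refine Nat.mul_le_mul_left _ (Nat.mul_le_mul_left _ hstep)
            _ = n * ((n * ((a j0).factorial * (n - a j0).factorial)) * n.factorial ^ 2) := by
                ring
            _ ≤ n * (n.factorial * n.factorial ^ 2) :=
                Nat.mul_le_mul_left _ (Nat.mul_le_mul_right _ hbb)
            _ = n * n.factorial ^ 3 := by ring
        have hsmall : 2 * ∏ j, (a j).factorial ≤ n.factorial ^ 3 :=
          Nat.le_of_mul_le_mul_left hbig (by omega)
        calc 2 * (3 * n).factorial
            = (2 * ∏ j, (a j).factorial) * Nat.multinomial Finset.univ a := by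
              rw [← hfact]; ring
          _ ≤ n.factorial ^ 3 * Nat.multinomial Finset.univ a :=
              Nat.mul_le_mul_right _ hsmall
          _ ≤ n.factorial ^ 3 * (Nat.multinomial Finset.univ a * ∏ j, (d j) ^ (a j)) := by
              refine Nat.mul_le_mul_left _ ?_
              exact Nat.le_mul_of_pos_right _ hprodd
          _ = n.factorial ^ 3 * bez A I := by rw [hbezform]
      · -- coloring case: contradiction
        exfalso
        apply hcol
        push_neg at hmid
        have hclassof : ∀ j, a j = 0 ∨ a j = n := by
          intro j
          by_cases h : a j = 0
          · exact Or.inl h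
          · have h1 : 1 ≤ a j := by omega
            have := hmid j h1
            have := hale j
            omega
        have hcardS : (Finset.univ.filter (fun j => (I j).Nonempty)).card = 3 := by
          have h1 : ∑ j ∈ Finset.univ.filter (fun j => (I j).Nonempty), a j = ∑ j, a j := by
            refine Finset.sum_subset (Finset.filter_subset _ _) ?_
            intro j _ hj
            simp only [Finset.mem_filter, Finset.mem_univ, true_and] at hj
            show (I j).card = 0
            rw [Finset.not_nonempty_iff_eq_empty.mp hj]
            rfl
          have h2 : ∀ j ∈ Finset.univ.filter (fun j => (I j).Nonempty), a j = n := by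
            intro j hj
            simp only [Finset.mem_filter, Finset.mem_univ, true_and] at hj
            have h3 : 1 ≤ a j := Finset.card_pos.mpr hj
            rcases hclassof j with h | h
            · omega
            · exact h
          rw [Finset.sum_congr rfl h2, Finset.sum_const, smul_eq_mul, hsuma] at h1
          exact Nat.eq_of_mul_eq_mul_right (show 0 < n by omega) h1
        let e := Finset.equivFinOfCardEq hcardS
        refine ⟨fun s => Finset.univ.filter (fun v => (v, (0 : Fin 3)) ∈ I (e.symm s).1), ⟨?_, ?_⟩, ?_⟩
        · intro s t hst
          rw [Finset.disjoint_left]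
          intro v hvs hvt
          have h1 := (Finset.mem_filter.mp hvs).2
          have h2 := (Finset.mem_filter.mp hvt).2
          have hne : ((e.symm s).1 : Fin k) ≠ (e.symm t).1 := by
            intro h
            exact hst (e.symm.injective (Subtype.ext h))
          exact Finset.disjoint_left.mp (hI.1 _ _ hne) h1 h2
        · intro v
          obtain ⟨j, hj⟩ := hI.2 (v, (0 : Fin 3))
          have hjS : j ∈ Finset.univ.filter (fun j => (I j).Nonempty) :=
            Finset.mem_filter.mpr ⟨Finset.mem_univ _, ⟨_, hj⟩⟩
          refine ⟨e ⟨j, hjS⟩, Finset.mem_filter.mpr ⟨Finset.mem_univ _, ?_⟩⟩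
          rw [Equiv.symm_apply_apply]
          exact hj
        · intro s u hu v hv hadj
          have h1 := (Finset.mem_filter.mp hu).2
          have h2 := (Finset.mem_filter.mp hv).2
          exact hind _ _ h1 _ h2 (SimpleGraph.boxProd_adj.mpr (Or.inl ⟨hadj, rfl⟩))

end Key

section Upper
open Classical

lemma colToPartition {V : Type*} [Fintype V] (G : SimpleGraph V) {n : ℕ}
    (hn : Fintype.card V = n) (hn1 : 1 ≤ n) (J : Fin 3 → Finset V)
    (hpart : IsPartitionFam J) (hprop : ProperFam G J) :
    ∃ I : Fin 3 → Finset (V × Fin 3), IsPartitionFam I ∧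
      bez (graphSupport (G.boxProd (SimpleGraph.completeGraph (Fin 3)))) I
        = (3 * n).factorial / n.factorial ^ 3 := by
  choose c hc using hpart.2
  refine ⟨fun s => Finset.univ.filter (fun w : V × Fin 3 => c w.1 + w.2 = s), ⟨?_, ?_⟩, ?_⟩
  · intro s t hst
    rw [Finset.disjoint_left]
    intro w hws hwt
    have h1 := (Finset.mem_filter.mp hws).2
    have h2 := (Finset.mem_filter.mp hwt).2
    exact hst (h1.symm.trans h2)
  · intro w
    exact ⟨c w.1 + w.2, Finset.mem_filter.mpr ⟨Finset.mem_univ _, rfl⟩⟩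
  · -- compute bez
    have hcard : ∀ s : Fin 3,
        (Finset.univ.filter (fun w : V × Fin 3 => c w.1 + w.2 = s)).card = n := by
      intro s
      have himg : Finset.univ.filter (fun w : V × Fin 3 => c w.1 + w.2 = s)
          = Finset.univ.image (fun v : V => (v, s - c v)) := by
        ext w
        simp only [Finset.mem_filter, Finset.mem_univ, true_and, Finset.mem_image]
        constructor
        · intro h
          refine ⟨w.1, ?_⟩
          have h2 : s - c w.1 = w.2 := by rw [← h]; exact add_sub_cancel_left _ _
          rw [h2]
        · rintro ⟨v, rfl⟩
          show c v + (s - c v) = s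
          rw [add_comm]
          exact sub_add_cancel s (c v)
      rw [himg, Finset.card_image_of_injective _ (fun v w h => congrArg Prod.fst h),
        Finset.card_univ, hn]
    have hindep : ∀ s : Fin 3, ∀ u ∈ Finset.univ.filter (fun w : V × Fin 3 => c w.1 + w.2 = s),
        ∀ v ∈ Finset.univ.filter (fun w : V × Fin 3 => c w.1 + w.2 = s),
        ¬ (G.boxProd (SimpleGraph.completeGraph (Fin 3))).Adj u v := by
      intro s u hu v hv hadj
      have h1 := (Finset.mem_filter.mp hu).2
      have h2 := (Finset.mem_filter.mp hv).2
      rcases SimpleGraph.boxProd_adj.mp hadj with ⟨hGadj, he⟩ | ⟨hKadj, he⟩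
      · have hcc : c u.1 = c v.1 := by
          have := h1.trans h2.symm
          rw [he] at this
          exact add_right_cancel this
        exact hprop (c u.1) u.1 (hc u.1) v.1 (by rw [hcc]; exact hc v.1) hGadj
      · have : u.2 = v.2 := by
          have := h1.trans h2.symm
          rw [he] at this
          exact add_left_cancel this
        have hne : u.2 ≠ v.2 := by simpa [SimpleGraph.completeGraph] using hKadj
        exact hne this
    have hd1 : ∀ s : Fin 3,
        (graphSupport (G.boxProd (SimpleGraph.completeGraph (Fin 3)))).sup
          (fun α => ∑ l ∈ Finset.univ.filter (fun w : V × Fin 3 => c w.1 + w.2 = s), α l) = 1 := by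
      intro s
      refine le_antisymm (graphSupport_sup_le_one (hindep s)) (one_le_sup ?_)
      rw [← Finset.card_pos, hcard s]
      omega
    show Nat.multinomial Finset.univ _ * _ = _
    rw [M_def]
    have hfun : (fun s : Fin 3 =>
        (Finset.univ.filter (fun w : V × Fin 3 => c w.1 + w.2 = s)).card) = fun _ => n := by
      funext s
      exact hcard s
    rw [hfun]
    have hprod : (∏ s : Fin 3, ((graphSupport (G.boxProd (SimpleGraph.completeGraph (Fin 3)))).sup
        (fun α => ∑ l ∈ Finset.univ.filter (fun w : V × Fin 3 => c w.1 + w.2 = s), α l))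
          ^ ((Finset.univ.filter (fun w : V × Fin 3 => c w.1 + w.2 = s)).card)) = 1 := by
      refine Finset.prod_eq_one fun s _ => ?_
      rw [hd1 s]
      exact one_pow _
    rw [hprod, mul_one]

end Upper

/-- Let `G` be a finite simple graph with `n ≥ 1` vertices. If `G`
admits a proper 3-coloring then `min_I Béz(A(G □ K₃); I) = (3n)!/(n!)³`; otherwise
`3 · min_I Béz(A(G □ K₃); I) ≥ 4 · (3n)!/(n!)³`. -/
theorem stmt_12 {V : Type*} [Fintype V] (G : SimpleGraph V) (n : ℕ)
    (hn : Fintype.card V = n) (hn1 : 1 ≤ n) :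
    ((∃ I : Fin 3 → Finset V, IsPartitionFam I ∧ ProperFam G I) →
        minBez (graphSupport (G.boxProd (SimpleGraph.completeGraph (Fin 3)))) =
          (3 * n).factorial / n.factorial ^ 3) ∧
      (¬ (∃ I : Fin 3 → Finset V, IsPartitionFam I ∧ ProperFam G I) →
        4 * ((3 * n).factorial / n.factorial ^ 3) ≤
          3 * minBez (graphSupport (G.boxProd (SimpleGraph.completeGraph (Fin 3))))) := by
  have hMspec : n.factorial ^ 3 * ((3 * n).factorial / n.factorial ^ 3)
      = (3 * n).factorial := by
    rw [M_def]
    exact multinomial_three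
  have hPpos : 0 < n.factorial ^ 3 := by positivity
  have hminBez : minBez (graphSupport (G.boxProd (SimpleGraph.completeGraph (Fin 3))))
      = sInf {b : ℕ | ∃ (k : ℕ) (I : Fin k → Finset (V × Fin 3)), IsPartitionFam I ∧
          bez (graphSupport (G.boxProd (SimpleGraph.completeGraph (Fin 3)))) I = b} := rfl
  constructor
  · rintro ⟨J, hJp, hJc⟩
    obtain ⟨I, hIp, hIb⟩ := colToPartition G hn hn1 J hJp hJc
    have hmem : (3 * n).factorial / n.factorial ^ 3 ∈
        {b : ℕ | ∃ (k : ℕ) (I : Fin k → Finset (V × Fin 3)), IsPartitionFam I ∧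
          bez (graphSupport (G.boxProd (SimpleGraph.completeGraph (Fin 3)))) I = b} := ⟨3, I, hIp, hIb⟩
    rw [hminBez]
    refine le_antisymm (Nat.sInf_le hmem) ?_
    refine le_csInf ⟨_, hmem⟩ ?_
    rintro b ⟨k, I', hp, rfl⟩
    have h1 := (key G hn hn1 I' hp).1
    rw [← hMspec] at h1
    exact Nat.le_of_mul_le_mul_left h1 hPpos
  · intro hcol
    have hne : Set.Nonempty {b : ℕ | ∃ (k : ℕ) (I : Fin k → Finset (V × Fin 3)), IsPartitionFam I ∧
        bez (graphSupport (G.boxProd (SimpleGraph.completeGraph (Fin 3)))) I = b} := by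
      refine ⟨_, 1, fun _ => Finset.univ, ⟨?_, ?_⟩, rfl⟩
      · intro i j h
        exact absurd (Subsingleton.elim i j) h
      · intro v
        exact ⟨0, Finset.mem_univ v⟩
    obtain ⟨k, I', hp, hb⟩ := Nat.sInf_mem hne
    have h2 := (key G hn hn1 I' hp).2 hcol
    rw [hb, ← hminBez] at h2
    set m := minBez (graphSupport (G.boxProd (SimpleGraph.completeGraph (Fin 3)))) with hm
    set M := (3 * n).factorial / n.factorial ^ 3 with hM
    have h3 : n.factorial ^ 3 * (4 * M) ≤ n.factorial ^ 3 * (3 * m) := by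
      calc n.factorial ^ 3 * (4 * M) = 2 * (2 * (n.factorial ^ 3 * M)) := by ring
        _ = 2 * (2 * (3 * n).factorial) := by rw [hMspec]
        _ ≤ 2 * (n.factorial ^ 3 * m) := Nat.mul_le_mul_left _ h2
        _ = n.factorial ^ 3 * (2 * m) := by ring
        _ ≤ n.factorial ^ 3 * (3 * m) :=
            Nat.mul_le_mul_left _ (Nat.mul_le_mul_right _ (by omega))
    exact Nat.le_of_mul_le_mul_left h3 hPpos
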